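/- Let B : ℝ^m → ℝ^{m×d} be bounded and Lipschitz, let u ∈ ℝ^d, λ ∈ ℝ, z_0 ∈ ℝ^m, and let g : [0,1] → ℝ be Lipschitz with g(0) = 0; set P(s) = g(s)·u, so that P is a Lipschitz path taking values on a line through the origin with P(0) = 0 and P(1) = g(1)·u. Let Z : [0,1] → ℝ^m be the unique Lipschitz solution of Z(s) = z_0 + λ ∫_0^s g'(r) B(Z(r)) u dr (with g' the a.e. derivative of g), and let Z^ℓ : [0,1] → ℝ^m be the unique solution of Z^ℓ(s) = z_0 + λ g(1) ∫_0^s B(Z^ℓ(r)) u dr. Then Z(1) = Z^ℓ(1). -/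

import Mathlib

open MeasureTheory Set Filter intervalIntegral

lemma lip_mono_aux {h : ℝ → ℝ} {K : NNReal} (hh : LipschitzWith K h) :
    Monotone (fun x => (K : ℝ) * x + h x) := by
  intro x y hxy
  have h1 : dist (h x) (h y) ≤ (K : ℝ) * dist x y := hh.dist_le_mul x y
  rw [Real.dist_eq, Real.dist_eq, abs_of_nonpos (by linarith : x - y ≤ 0)] at h1
  simp only
  nlinarith [le_abs_self (h x - h y)]

lemma lip_stieltjes_eq {p : ℝ → ℝ} (hp : Monotone p) (hc : Continuous p) (x : ℝ) :
    hp.stieltjesFunction x = p x := by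
  rw [hp.stieltjesFunction_eq]
  exact rightLim_eq_of_tendsto
    (hc.continuousAt.continuousWithinAt.tendsto)

/-- FTC for Lipschitz functions: the integral of the derivative recovers the function. -/
lemma lipschitz_integral_deriv {h : ℝ → ℝ} {K : NNReal} (hh : LipschitzWith K h)
    {a b : ℝ} (hab : a ≤ b) :
    ∫ t in a..b, deriv h t = h b - h a := by
  classical
  have hhc : Continuous h := hh.continuous
  set p : ℝ → ℝ := fun x => (K : ℝ) * x + h x with hp_def
  set q : ℝ → ℝ := fun x => (K : ℝ) * x - h x with hq_def
  have hp : Monotone p := lip_mono_aux hh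
  have hq : Monotone q := by
    have := lip_mono_aux (K := K) (h := fun x => -h x) (hh.neg)
    simpa [q, sub_eq_add_neg] using this
  have hpc : Continuous p := by continuity
  have hqc : Continuous q := by continuity
  -- the sum of the Stieltjes measures of `p` and `q` is `2K • volume`
  have hsum : hp.stieltjesFunction + hq.stieltjesFunction
      = ((2 * K : NNReal) • StieltjesFunction.id) := by
    ext x
    show hp.stieltjesFunction x + hq.stieltjesFunction x = _
    rw [lip_stieltjes_eq hp hpc, lip_stieltjes_eq hq hqc]
    show (K:ℝ) * x + h x + ((K:ℝ)*x - h x) = ((2 * K : NNReal) : ℝ) * x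
    push_cast
    ring
  set μ := hp.stieltjesFunction.measure with hμ_def
  have hle : μ ≤ (2 * K : NNReal) • (volume : Measure ℝ) := by
    have : μ + hq.stieltjesFunction.measure
        = ((2 * K : NNReal) • StieltjesFunction.id).measure := by
      rw [← StieltjesFunction.measure_add, hsum]
    rw [StieltjesFunction.measure_smul, ← Real.volume_eq_stieltjes_id] at this
    calc μ ≤ μ + hq.stieltjesFunction.measure := Measure.le_add_right le_rfl
    _ = _ := this
  have hac : μ ≪ (volume : Measure ℝ) := by
    intro s hs
    have h2 := hle s
    exact le_antisymm (by simpa [hs] using h2) zero_le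
  have hsf : SigmaFinite μ := by
    have : IsLocallyFiniteMeasure μ := by infer_instance
    infer_instance
  -- a.e., `deriv h = (rnDeriv μ volume).toReal - K`
  have hae : ∀ᵐ t, (K : ℝ) + deriv h t = (μ.rnDeriv volume t).toReal := by
    filter_upwards [hp.ae_hasDerivAt, hh.ae_differentiableAt_of_real] with t ht hdt
    have h1 : HasDerivAt p ((K : ℝ) + deriv h t) t := by
      have h1' := ((hasDerivAt_id t).const_mul (K : ℝ)).add hdt.hasDerivAt
      simp only [id, mul_one] at h1'
      exact h1'
    rw [← ht.deriv, ← h1.deriv]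
  -- integrability of `deriv h`
  have hmeas : Measurable (deriv h) := measurable_deriv h
  have hbd : ∀ᵐ t, ‖deriv h t‖ ≤ (K : ℝ) := by
    refine Eventually.of_forall fun t => ?_
    have h1 : ‖fderiv ℝ h t‖ ≤ (K : ℝ) := norm_fderiv_le_of_lipschitz ℝ hh
    have h2 : deriv h t = fderiv ℝ h t 1 := rfl
    calc ‖deriv h t‖ ≤ ‖fderiv ℝ h t‖ * ‖(1:ℝ)‖ := by rw [h2]; exact (fderiv ℝ h t).le_opNorm 1
    _ ≤ (K : ℝ) := by simpa using h1
  have hconst : IntegrableOn (fun _ : ℝ => (K : ℝ)) (Ioc a b) volume :=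
    integrableOn_const measure_Ioc_lt_top.ne
  have hint : IntegrableOn (deriv h) (Ioc a b) volume :=
    Integrable.mono' hconst hmeas.aestronglyMeasurable (ae_restrict_of_ae hbd)
  have hintK : IntegrableOn (fun t => (K : ℝ) + deriv h t) (Ioc a b) volume :=
    hconst.add hint
  -- compute
  have key : ∫ t in Ioc a b, ((K : ℝ) + deriv h t) = p b - p a := by
    rw [integral_congr_ae (ae_restrict_of_ae hae)]
    have := Measure.setIntegral_toReal_rnDeriv hac (Ioc a b)
    rw [this]
    simp only [hμ_def, StieltjesFunction.measure_Ioc, lip_stieltjes_eq hp hpc]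
    rw [measureReal_def, StieltjesFunction.measure_Ioc, lip_stieltjes_eq hp hpc, lip_stieltjes_eq hp hpc,
      ENNReal.toReal_ofReal (sub_nonneg.2 (hp hab))]
  have h2 : ∫ t in Ioc a b, ((K : ℝ) + deriv h t)
      = (K : ℝ) * (b - a) + ∫ t in Ioc a b, deriv h t := by
    rw [MeasureTheory.integral_add hconst hint]
    simp [Real.volume_Ioc, ENNReal.toReal_ofReal (sub_nonneg.2 hab), max_eq_left (sub_nonneg.2 hab)]
    ring
  rw [intervalIntegral.integral_of_le hab]
  have : p b - p a = (K : ℝ) * (b - a) + (h b - h a) := by simp [p]; ring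
  linarith [key, h2]

/-- FTC for functions Lipschitz on an interval, with a prescribed a.e. derivative. -/
lemma lipschitz_ftc_on {h : ℝ → ℝ} {K : NNReal} {a b : ℝ} (hab : a ≤ b)
    (hh : LipschitzOnWith K h (Set.Icc a b)) {f' : ℝ → ℝ}
    (hd : ∀ᵐ t ∂(volume.restrict (Set.Ioo a b)), HasDerivAt h (f' t) t) :
    ∫ t in a..b, f' t = h b - h a := by
  obtain ⟨H, Hlip, HEq⟩ := hh.extend_real
  have h1 : ∀ᵐ t ∂(volume.restrict (Set.Ioo a b)), f' t = deriv H t := by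
    filter_upwards [hd, ae_restrict_mem measurableSet_Ioo] with t ht hmem
    have hev : H =ᶠ[nhds t] h :=
      eventuallyEq_of_mem (Icc_mem_nhds hmem.1 hmem.2) (fun x hx => (HEq hx).symm)
    exact ((ht.congr_of_eventuallyEq hev).deriv).symm
  have h2 : ∫ t in a..b, f' t = ∫ t in a..b, deriv H t := by
    rw [intervalIntegral.integral_of_le hab, intervalIntegral.integral_of_le hab]
    refine integral_congr_ae ?_
    rwa [← Measure.restrict_congr_set Ioo_ae_eq_Ioc] 
  rw [h2, lipschitz_integral_deriv Hlip hab,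
    HEq (left_mem_Icc.2 hab), HEq (right_mem_Icc.2 hab)]

/-- Vector-valued FTC for Lipschitz functions with a prescribed a.e. derivative. -/
lemma lipschitz_ftc_vec {m : ℕ} {F : ℝ → EuclideanSpace ℝ (Fin m)} {K : NNReal} {a b : ℝ}
    (hab : a ≤ b) (hF : LipschitzOnWith K F (Set.Icc a b)) {f' : ℝ → EuclideanSpace ℝ (Fin m)}
    (hd : ∀ᵐ t ∂(volume.restrict (Set.Ioo a b)), HasDerivAt F (f' t) t)
    (hi : IntervalIntegrable f' volume a b) :
    ∫ t in a..b, f' t = F b - F a := by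
  have key : ∀ i : Fin m, (∫ t in a..b, f' t) i = F b i - F a i := by
    intro i
    set L : EuclideanSpace ℝ (Fin m) →L[ℝ] ℝ := EuclideanSpace.proj i with hL
    have hcomm : (∫ t in a..b, f' t) i = ∫ t in a..b, (f' t) i := by
      have := (L.intervalIntegral_comp_comm hi (a := a) (b := b)).symm
      simpa [hL, PiLp.proj_apply, Function.comp_def] using this
    rw [hcomm]
    have hlip : LipschitzOnWith (‖L‖₊ * K) (fun t => F t i) (Set.Icc a b) := by
      have := L.lipschitz.comp_lipschitzOnWith hF
      simpa [hL, PiLp.proj_apply, Function.comp_def] using this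
    have hd' : ∀ᵐ t ∂(volume.restrict (Set.Ioo a b)),
        HasDerivAt (fun t => F t i) ((f' t) i) t := by
      filter_upwards [hd] with t ht
      have := L.hasFDerivAt.comp_hasDerivAt t ht
      simpa [hL, PiLp.proj_apply, Function.comp_def] using this
    exact lipschitz_ftc_on hab hlip hd'
  ext i
  · exact (key i).trans rfl

/-- Integral form of Grönwall's inequality with zero initial condition. -/
lemma gronwall_integral_zero {N : ℝ → ℝ} {C : ℝ} (hC : 0 ≤ C)
    (hcont : ContinuousOn N (Set.Icc 0 1))
    (hpos : ∀ s ∈ Set.Icc (0:ℝ) 1, 0 ≤ N s)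
    (hineq : ∀ s ∈ Set.Icc (0:ℝ) 1, N s ≤ C * ∫ r in (0:ℝ)..s, N r) :
    ∀ s ∈ Set.Icc (0:ℝ) 1, N s = 0 := by
  -- continuous extension of N to all of ℝ
  set N' : ℝ → ℝ := fun t => N (min (max t 0) 1) with hN'
  have hmaps : ∀ t : ℝ, min (max t 0) 1 ∈ Set.Icc (0:ℝ) 1 := fun t =>
    ⟨le_min (le_max_right t 0) zero_le_one, min_le_right _ _⟩
  have hN'c : Continuous N' := by
    refine hcont.comp_continuous (by continuity) hmaps
  have hN'eq : ∀ s ∈ Set.Icc (0:ℝ) 1, N' s = N s := by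
    intro s hs
    simp [hN', max_eq_left hs.1, min_eq_left hs.2]
  set W : ℝ → ℝ := fun s => ∫ r in (0:ℝ)..s, N' r with hW
  have hWd : ∀ s : ℝ, HasDerivAt W (N' s) s := fun s =>
    intervalIntegral.integral_hasDerivAt_right (hN'c.intervalIntegrable 0 s)
      hN'c.stronglyMeasurable.stronglyMeasurableAtFilter hN'c.continuousAt
  have hWN : ∀ s ∈ Set.Icc (0:ℝ) 1, W s = ∫ r in (0:ℝ)..s, N r := by
    intro s hs
    refine intervalIntegral.integral_congr (fun r hr => ?_)
    rw [Set.uIcc_of_le hs.1] at hr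
    exact hN'eq r ⟨hr.1, hr.2.trans hs.2⟩
  -- F := W * exp(-(C s)) is antitone on [0,1]
  set F : ℝ → ℝ := fun s => W s * Real.exp (-(C * s)) with hF
  have hFd : ∀ s : ℝ, HasDerivAt F ((N' s - C * W s) * Real.exp (-(C * s))) s := by
    intro s
    have h1 : HasDerivAt (fun s => Real.exp (-(C * s))) (-C * Real.exp (-(C * s))) s := by
      have h2 : HasDerivAt (fun s : ℝ => -(C * s)) (-C) s := by
        have h2' := ((hasDerivAt_id s).const_mul C).neg
        simp only [id, mul_one] at h2'
        exact h2'
      simpa [mul_comm] using h2.exp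
    have := (hWd s).mul h1
    exact this.congr_deriv (by ring)
  have hanti : AntitoneOn F (Set.Icc 0 1) := by
    refine antitoneOn_of_deriv_nonpos (convex_Icc 0 1) ?_ ?_ ?_
    · exact fun s _ => ((hFd s).continuousAt).continuousWithinAt
    · intro s _
      exact (hFd s).differentiableAt.differentiableWithinAt
    · intro s hs
      rw [interior_Icc] at hs
      rw [(hFd s).deriv]
      have hs' : s ∈ Set.Icc (0:ℝ) 1 := ⟨hs.1.le, hs.2.le⟩
      have h3 : N' s ≤ C * W s := by
        rw [hN'eq s hs', hWN s hs']; exact hineq s hs'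
      have : (0:ℝ) < Real.exp (-(C * s)) := Real.exp_pos _
      nlinarith
  intro s hs
  have hW0 : W 0 = 0 := by simp [hW]
  have hF0 : F 0 = 0 := by simp [hF, hW0]
  have hFs : F s ≤ 0 := by
    have := hanti (Set.left_mem_Icc.2 zero_le_one) hs hs.1
    rwa [hF0] at this
  have hWnn : 0 ≤ W s := by
    rw [hWN s hs]
    refine intervalIntegral.integral_nonneg hs.1 (fun r hr => hpos r ⟨hr.1, hr.2.trans hs.2⟩)
  have hWs : W s ≤ 0 := by
    by_contra hcon
    push_neg at hcon
    have h5 := mul_pos hcon (Real.exp_pos (-(C * s)))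
    have hFs' : W s * Real.exp (-(C * s)) ≤ 0 := hFs
    linarith
  have hW0' : W s = 0 := le_antisymm hWs hWnn
  have := hineq s hs
  rw [← hWN s hs, hW0', mul_zero] at this
  exact le_antisymm this (hpos s hs)

lemma comparison_lemma {m d : ℕ}
    {B : EuclideanSpace ℝ (Fin m) → EuclideanSpace ℝ (Fin d) →L[ℝ] EuclideanSpace ℝ (Fin m)}
    {M : ℝ} (hBbd : ∀ x, ‖B x‖ ≤ M) {K : NNReal} (hBlip : LipschitzWith K B)
    (u : EuclideanSpace ℝ (Fin d)) (lam' : ℝ)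
    {X Y : ℝ → EuclideanSpace ℝ (Fin m)}
    (hX : ContinuousOn X (Set.Icc 0 1)) (hY : ContinuousOn Y (Set.Icc 0 1))
    {w : ℝ → ℝ} (hw : AEStronglyMeasurable w (volume.restrict (Set.Ioc 0 1)))
    {c : ℝ} (hc : 0 ≤ c)
    (hwb : ∀ᵐ r ∂(volume.restrict (Set.Ioc 0 1)), |w r| ≤ c)
    (hXY : ∀ s ∈ Set.Icc (0:ℝ) 1,
      X s - Y s = lam' • ∫ r in (0:ℝ)..s, w r • ((B (X r)) u - (B (Y r)) u)) :
    ∀ s ∈ Set.Icc (0:ℝ) 1, X s = Y s := by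
  have hM : 0 ≤ M := le_trans (norm_nonneg _) (hBbd 0)
  set D : ℝ → EuclideanSpace ℝ (Fin m) := fun r => (B (X r)) u - (B (Y r)) u with hD
  set N : ℝ → ℝ := fun r => ‖X r - Y r‖ with hN
  have hNc : ContinuousOn N (Set.Icc 0 1) := (hX.sub hY).norm
  have hNpos : ∀ s ∈ Set.Icc (0:ℝ) 1, 0 ≤ N s := fun s _ => norm_nonneg _
  have hDc : ContinuousOn D (Set.Icc 0 1) := by
    refine ContinuousOn.sub ?_ ?_
    · exact (hBlip.continuous.comp_continuousOn hX).clm_apply continuousOn_const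
    · exact (hBlip.continuous.comp_continuousOn hY).clm_apply continuousOn_const
  have hDbd : ∀ r ∈ Set.Icc (0:ℝ) 1, ‖D r‖ ≤ (K : ℝ) * N r * ‖u‖ := by
    intro r _
    have h1 : ‖B (X r) - B (Y r)‖ ≤ (K : ℝ) * ‖X r - Y r‖ := by
      have := hBlip.dist_le_mul (X r) (Y r)
      rwa [dist_eq_norm, dist_eq_norm] at this
    calc ‖D r‖ = ‖(B (X r) - B (Y r)) u‖ := by simp [hD]
    _ ≤ ‖B (X r) - B (Y r)‖ * ‖u‖ := (B (X r) - B (Y r)).le_opNorm u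
    _ ≤ (K : ℝ) * N r * ‖u‖ := by
        exact mul_le_mul_of_nonneg_right h1 (norm_nonneg u)
  set C : ℝ := |lam'| * (c * ((K : ℝ) * ‖u‖)) with hC
  have hCpos : 0 ≤ C := by positivity
  have key : ∀ s ∈ Set.Icc (0:ℝ) 1, N s ≤ C * ∫ r in (0:ℝ)..s, N r := by
    intro s hs
    have hsub : Set.Ioc (0:ℝ) s ⊆ Set.Ioc 0 1 := Set.Ioc_subset_Ioc le_rfl hs.2
    have hwb' : ∀ᵐ r ∂(volume.restrict (Set.Ioc 0 s)), |w r| ≤ c :=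
      ae_restrict_of_ae_restrict_of_subset hsub hwb
    have hw' : AEStronglyMeasurable w (volume.restrict (Set.Ioc 0 s)) :=
      hw.mono_measure (Measure.restrict_mono hsub le_rfl)
    have hik : IntervalIntegrable (fun r => ‖w r • D r‖) volume 0 s := by
      rw [intervalIntegrable_iff_integrableOn_Ioc_of_le hs.1]
      have hsm : AEStronglyMeasurable (fun r => ‖w r • D r‖) (volume.restrict (Set.Ioc 0 s)) := by
        refine AEStronglyMeasurable.norm ?_
        refine hw'.smul ?_
        exact ((hDc.mono (Set.Ioc_subset_Icc_self.trans (Set.Icc_subset_Icc le_rfl hs.2))).aestronglyMeasurable measurableSet_Ioc)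
      have hcn : IntegrableOn (fun _ : ℝ => c * (2 * (M * ‖u‖))) (Set.Ioc 0 s) volume :=
        integrableOn_const measure_Ioc_lt_top.ne
      refine Integrable.mono' hcn hsm ?_
      filter_upwards [hwb', ae_restrict_mem measurableSet_Ioc] with r hr hrmem
      have hDr : ‖D r‖ ≤ 2 * (M * ‖u‖) := by
        have h1 : ‖(B (X r)) u‖ ≤ M * ‖u‖ :=
          le_trans ((B (X r)).le_opNorm u) (mul_le_mul_of_nonneg_right (hBbd _) (norm_nonneg u))
        have h2 : ‖(B (Y r)) u‖ ≤ M * ‖u‖ :=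
          le_trans ((B (Y r)).le_opNorm u) (mul_le_mul_of_nonneg_right (hBbd _) (norm_nonneg u))
        calc ‖D r‖ ≤ ‖(B (X r)) u‖ + ‖(B (Y r)) u‖ := norm_sub_le _ _
        _ ≤ 2 * (M * ‖u‖) := by linarith
      have : ‖w r • D r‖ = |w r| * ‖D r‖ := by rw [norm_smul, Real.norm_eq_abs]
      rw [Real.norm_eq_abs, abs_of_nonneg (norm_nonneg _), this]
      exact mul_le_mul hr hDr (norm_nonneg _) hc
    have hig : IntervalIntegrable (fun r => c * ((K : ℝ) * ‖u‖) * N r) volume 0 s := by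
      refine ContinuousOn.intervalIntegrable ?_
      refine (continuousOn_const.mul (hNc.mono ?_))
      rw [Set.uIcc_of_le hs.1]
      exact Set.Icc_subset_Icc le_rfl hs.2
    have hmono : ∫ r in (0:ℝ)..s, ‖w r • D r‖ ≤ ∫ r in (0:ℝ)..s, c * ((K : ℝ) * ‖u‖) * N r := by
      refine intervalIntegral.integral_mono_ae_restrict hs.1 hik hig ?_
      have h0 : ∀ᵐ r ∂(volume.restrict (Set.Icc 0 s)), |w r| ≤ c := by
        rwa [Measure.restrict_congr_set Ioc_ae_eq_Icc.symm]
      filter_upwards [h0, ae_restrict_mem measurableSet_Icc] with r hr hrmem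
      have hrmem' : r ∈ Set.Icc (0:ℝ) 1 := ⟨hrmem.1, hrmem.2.trans hs.2⟩
      calc ‖w r • D r‖ = |w r| * ‖D r‖ := by rw [norm_smul, Real.norm_eq_abs]
      _ ≤ c * ((K : ℝ) * N r * ‖u‖) :=
          mul_le_mul hr (hDbd r hrmem') (norm_nonneg _) hc
      _ = c * ((K : ℝ) * ‖u‖) * N r := by ring
    calc N s = ‖lam' • ∫ r in (0:ℝ)..s, w r • D r‖ := by
          show ‖X s - Y s‖ = _
          rw [hXY s hs]
    _ = |lam'| * ‖∫ r in (0:ℝ)..s, w r • D r‖ := by rw [norm_smul, Real.norm_eq_abs]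
    _ ≤ |lam'| * ∫ r in (0:ℝ)..s, ‖w r • D r‖ := by
        exact mul_le_mul_of_nonneg_left
          (intervalIntegral.norm_integral_le_integral_norm hs.1) (abs_nonneg _)
    _ ≤ |lam'| * ∫ r in (0:ℝ)..s, c * ((K : ℝ) * ‖u‖) * N r :=
        mul_le_mul_of_nonneg_left hmono (abs_nonneg _)
    _ = C * ∫ r in (0:ℝ)..s, N r := by
        rw [intervalIntegral.integral_const_mul, hC]; ring
  intro s hs
  have := gronwall_integral_zero hCpos hNc hNpos key s hs
  rw [hN] at this
  exact sub_eq_zero.1 (norm_eq_zero.1 this)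

lemma II_of_bdd {E : Type*} [NormedAddCommGroup E] {f : ℝ → E} {a b c : ℝ} (hab : a ≤ b)
    (hm : AEStronglyMeasurable f (volume.restrict (Set.Ioc a b)))
    (hb : ∀ᵐ r ∂(volume.restrict (Set.Ioc a b)), ‖f r‖ ≤ c) :
    IntervalIntegrable f volume a b := by
  rw [intervalIntegrable_iff_integrableOn_Ioc_of_le hab]
  exact Integrable.mono' (integrableOn_const measure_Ioc_lt_top.ne) hm hb

/-- A linear excursion can be replaced by its chord: if `Z` solves
`dZ = λ B(Z) dP` along the profile `P(s) = g(s) u` (a path on a line through `0`), and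
`Zℓ` solves the ODE driven by the straight line with the same endpoint,
`dZℓ = λ g(1) B(Zℓ) u ds`, with the same initial value `z₀`, then `Z(1) = Zℓ(1)`. -/
theorem stmt16 {m d : ℕ}
    (B : EuclideanSpace ℝ (Fin m) → EuclideanSpace ℝ (Fin d) →L[ℝ] EuclideanSpace ℝ (Fin m))
    (M : ℝ) (hBbd : ∀ x, ‖B x‖ ≤ M) (K : NNReal) (hBlip : LipschitzWith K B)
    (u : EuclideanSpace ℝ (Fin d)) (lam : ℝ) (z₀ : EuclideanSpace ℝ (Fin m))
    (g : ℝ → ℝ) (Kg : NNReal) (hg : LipschitzOnWith Kg g (Set.Icc 0 1)) (hg0 : g 0 = 0)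
    (Z Zl : ℝ → EuclideanSpace ℝ (Fin m))
    (KZ : NNReal) (hZlip : LipschitzOnWith KZ Z (Set.Icc 0 1))
    (hZ : ∀ s ∈ Set.Icc (0 : ℝ) 1,
      Z s = z₀ + lam • ∫ r in (0 : ℝ)..s, derivWithin g (Set.Icc 0 1) r • (B (Z r)) u)
    (hZlcont : ContinuousOn Zl (Set.Icc 0 1))
    (hZl : ∀ s ∈ Set.Icc (0 : ℝ) 1,
      Zl s = z₀ + (lam * g 1) • ∫ r in (0 : ℝ)..s, (B (Zl r)) u) :
    Z 1 = Zl 1 := by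
  classical
  have hM : 0 ≤ M := le_trans (norm_nonneg _) (hBbd 0)
  -- extend `g` to a globally Lipschitz function `G`
  obtain ⟨G, hGlip, hGeq⟩ := hg.extend_real
  have hG0 : G 0 = 0 := by rw [← hGeq (Set.left_mem_Icc.2 zero_le_one), hg0]
  have hG1 : G 1 = g 1 := (hGeq (Set.right_mem_Icc.2 zero_le_one)).symm
  have hGbd : ∀ r ∈ Set.Icc (0:ℝ) 1, |G r| ≤ (Kg : ℝ) := by
    intro r hr
    have h1 := hGlip.dist_le_mul r 0
    rw [Real.dist_eq, Real.dist_eq, hG0, sub_zero, sub_zero] at h1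
    calc |G r| ≤ (Kg : ℝ) * |r| := h1
    _ ≤ (Kg : ℝ) * 1 := by
        refine mul_le_mul_of_nonneg_left ?_ Kg.coe_nonneg
        rw [abs_of_nonneg hr.1]; exact hr.2
    _ = (Kg : ℝ) := mul_one _
  -- Picard–Lindelöf solution φ of the autonomous ODE
  set v : ℝ → EuclideanSpace ℝ (Fin m) → EuclideanSpace ℝ (Fin m) :=
    fun _ x => lam • (B x) u with hv
  set C0 : ℝ := |lam| * (M * ‖u‖) with hC0
  have hC0n : 0 ≤ C0 := by positivity
  set a : ℝ := (Kg : ℝ) + 1 with ha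
  have ha0 : 0 < a := by positivity
  set L : NNReal := ‖lam‖₊ * (K * ‖u‖₊) with hL
  have hvlip : LipschitzWith L (fun x => lam • (B x) u) := by
    refine LipschitzWith.of_dist_le_mul (fun x y => ?_)
    rw [dist_eq_norm, ← smul_sub]
    calc ‖lam • ((B x) u - (B y) u)‖ = |lam| * ‖(B x - B y) u‖ := by
          rw [norm_smul, Real.norm_eq_abs]; simp
    _ ≤ |lam| * (‖B x - B y‖ * ‖u‖) :=
        mul_le_mul_of_nonneg_left ((B x - B y).le_opNorm u) (abs_nonneg _)
    _ ≤ |lam| * (((K : ℝ) * dist x y) * ‖u‖) := by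
        refine mul_le_mul_of_nonneg_left ?_ (abs_nonneg _)
        refine mul_le_mul_of_nonneg_right ?_ (norm_nonneg _)
        have := hBlip.dist_le_mul x y
        rwa [dist_eq_norm] at this
    _ = (L : ℝ) * dist x y := by
        simp only [hL, NNReal.coe_mul, coe_nnnorm, Real.norm_eq_abs]
        ring
  have hpl : IsPicardLindelof v (tmin := -a) (tmax := a) ⟨0, ⟨by linarith, by linarith⟩⟩ z₀
      (C0 * a).toNNReal 0 C0.toNNReal L := by
    constructor
    · exact fun t _ => hvlip.lipschitzOnWith
    · exact fun x _ => continuousOn_const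
    · intro t _ x _
      calc ‖lam • (B x) u‖ = |lam| * ‖(B x) u‖ := by rw [norm_smul, Real.norm_eq_abs]
      _ ≤ |lam| * (‖B x‖ * ‖u‖) := mul_le_mul_of_nonneg_left ((B x).le_opNorm u) (abs_nonneg _)
      _ ≤ C0 := by
          rw [hC0]
          refine mul_le_mul_of_nonneg_left ?_ (abs_nonneg _)
          exact mul_le_mul_of_nonneg_right (hBbd x) (norm_nonneg _)
      _ = _ := (Real.coe_toNNReal _ hC0n).symm
    · norm_num [Real.coe_toNNReal _ hC0n, Real.coe_toNNReal _ (mul_nonneg hC0n ha0.le), ha0.le]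
  obtain ⟨φ, hφ0, hφd⟩ := hpl.exists_eq_forall_mem_Icc_hasDerivWithinAt₀
  have hφat : ∀ t ∈ Set.Icc (-(Kg:ℝ)) Kg, HasDerivAt φ (lam • (B (φ t)) u) t := by
    intro t ht
    have h1 : t ∈ Set.Icc (-a) a := ⟨by simp only [ha]; linarith [ht.1], by simp only [ha]; linarith [ht.2]⟩
    refine (hφd t h1).hasDerivAt (Icc_mem_nhds ?_ ?_) <;> simp only [ha] <;>
      [linarith [ht.1]; linarith [ht.2]]
  have hφcont : ContinuousOn φ (Set.Icc (-a) a) := fun t ht => (hφd t ht).continuousWithinAt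
  have hφlip : LipschitzOnWith C0.toNNReal φ (Set.Icc (-a) a) := by
    refine (convex_Icc _ _).lipschitzOnWith_of_nnnorm_hasDerivWithin_le
      (f' := fun t => lam • (B (φ t)) u) (fun t ht => hφd t ht) (fun t ht => ?_)
    rw [← NNReal.coe_le_coe, coe_nnnorm, Real.coe_toNNReal _ hC0n]
    calc ‖lam • (B (φ t)) u‖ = |lam| * ‖(B (φ t)) u‖ := by rw [norm_smul, Real.norm_eq_abs]
    _ ≤ |lam| * (‖B (φ t)‖ * ‖u‖) :=
        mul_le_mul_of_nonneg_left ((B (φ t)).le_opNorm u) (abs_nonneg _)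
    _ ≤ C0 := by
        rw [hC0]
        refine mul_le_mul_of_nonneg_left ?_ (abs_nonneg _)
        exact mul_le_mul_of_nonneg_right (hBbd _) (norm_nonneg _)
  -- the composed solution y = φ ∘ G
  set y : ℝ → EuclideanSpace ℝ (Fin m) := fun r => φ (G r) with hy
  have hmaps : Set.MapsTo G (Set.Icc 0 1) (Set.Icc (-a) a) := by
    intro r hr
    have := hGbd r hr
    have h1 := abs_le.1 this
    constructor <;> simp only [ha] <;> linarith [h1.1, h1.2]
  have hyc : ContinuousOn y (Set.Icc 0 1) :=
    hφcont.comp hGlip.continuous.continuousOn hmaps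
  have hylip : LipschitzOnWith (C0.toNNReal * Kg) y (Set.Icc 0 1) :=
    hφlip.comp hGlip.lipschitzOnWith hmaps
  have hy0 : y 0 = z₀ := by rw [hy]; simp only [hG0]; exact hφ0
  -- the weight w = deriv G
  set w : ℝ → ℝ := deriv G with hw
  have hwmeas : Measurable w := measurable_deriv G
  have hwbd : ∀ r, |w r| ≤ (Kg : ℝ) := by
    intro r
    have h1 : ‖fderiv ℝ G r‖ ≤ (Kg : ℝ) := norm_fderiv_le_of_lipschitz ℝ hGlip
    have h2 : w r = fderiv ℝ G r 1 := rfl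
    calc |w r| = ‖fderiv ℝ G r 1‖ := by rw [h2, Real.norm_eq_abs]
    _ ≤ ‖fderiv ℝ G r‖ * ‖(1:ℝ)‖ := (fderiv ℝ G r).le_opNorm 1
    _ ≤ (Kg : ℝ) := by simpa using h1
  -- a.e. derivative of y
  have hyd : ∀ᵐ r ∂(volume.restrict (Set.Ioo (0:ℝ) 1)),
      HasDerivAt y (w r • (lam • (B (y r)) u)) r := by
    filter_upwards [ae_restrict_of_ae hGlip.ae_differentiableAt_of_real,
      ae_restrict_mem measurableSet_Ioo] with r hdG hr
    have hGr : G r ∈ Set.Icc (-(Kg:ℝ)) Kg := by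
      have := abs_le.1 (hGbd r ⟨hr.1.le, hr.2.le⟩)
      exact ⟨this.1, this.2⟩
    exact (hφat (G r) hGr).scomp r hdG.hasDerivAt
  -- integral equation for y
  have hyeq : ∀ s ∈ Set.Icc (0:ℝ) 1,
      y s = z₀ + lam • ∫ r in (0:ℝ)..s, w r • (B (y r)) u := by
    intro s hs
    have hsub : Set.Ioo (0:ℝ) s ⊆ Set.Ioo 0 1 := Set.Ioo_subset_Ioo le_rfl hs.2
    have hd' : ∀ᵐ r ∂(volume.restrict (Set.Ioo (0:ℝ) s)),
        HasDerivAt y (w r • (lam • (B (y r)) u)) r :=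
      ae_restrict_of_ae_restrict_of_subset hsub hyd
    have hsm : AEStronglyMeasurable (fun r => w r • (lam • (B (y r)) u))
        (volume.restrict (Set.Ioc 0 s)) := by
      refine (hwmeas.aemeasurable.aestronglyMeasurable).smul ?_
      refine AEStronglyMeasurable.const_smul ?_ lam
      refine ContinuousOn.aestronglyMeasurable ?_ measurableSet_Ioc
      refine ContinuousOn.clm_apply ?_ continuousOn_const
      exact hBlip.continuous.comp_continuousOn
        (hyc.mono (Set.Ioc_subset_Icc_self.trans (Set.Icc_subset_Icc le_rfl hs.2)))
    have hbdd : ∀ᵐ r ∂(volume.restrict (Set.Ioc (0:ℝ) s)),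
        ‖w r • (lam • (B (y r)) u)‖ ≤ (Kg : ℝ) * C0 := by
      refine Eventually.of_forall (fun r => ?_)
      calc ‖w r • (lam • (B (y r)) u)‖ = |w r| * ‖lam • (B (y r)) u‖ := by
            rw [norm_smul, Real.norm_eq_abs]
      _ ≤ (Kg : ℝ) * C0 := by
          refine mul_le_mul (hwbd r) ?_ (norm_nonneg _) Kg.coe_nonneg
          calc ‖lam • (B (y r)) u‖ = |lam| * ‖(B (y r)) u‖ := by
                rw [norm_smul, Real.norm_eq_abs]
          _ ≤ |lam| * (‖B (y r)‖ * ‖u‖) :=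
              mul_le_mul_of_nonneg_left ((B (y r)).le_opNorm u) (abs_nonneg _)
          _ ≤ C0 := by
              rw [hC0]
              refine mul_le_mul_of_nonneg_left ?_ (abs_nonneg _)
              exact mul_le_mul_of_nonneg_right (hBbd _) (norm_nonneg _)
    have hi : IntervalIntegrable (fun r => w r • (lam • (B (y r)) u)) volume 0 s :=
      II_of_bdd hs.1 hsm hbdd
    have hftc := lipschitz_ftc_vec hs.1
      (hylip.mono (Set.Icc_subset_Icc le_rfl hs.2)) hd' hi
    rw [hy0] at hftc
    have h2 : ∫ r in (0:ℝ)..s, w r • (lam • (B (y r)) u)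
        = lam • ∫ r in (0:ℝ)..s, w r • (B (y r)) u := by
      rw [← intervalIntegral.integral_smul]
      refine intervalIntegral.integral_congr (fun r _ => ?_)
      rw [smul_comm]
    rw [h2] at hftc
    exact sub_eq_iff_eq_add'.1 hftc.symm
  -- rewrite the equation for Z in terms of w
  have hZ' : ∀ s ∈ Set.Icc (0:ℝ) 1,
      Z s = z₀ + lam • ∫ r in (0:ℝ)..s, w r • (B (Z r)) u := by
    intro s hs
    rw [hZ s hs]
    congr 2
    refine intervalIntegral.integral_congr_ae ?_
    have hne : ∀ᵐ x : ℝ, x ≠ (1:ℝ) := by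
      rw [ae_iff]
      have : {x : ℝ | ¬x ≠ 1} = {1} := by ext x; simp
      rw [this]
      exact measure_singleton 1
    filter_upwards [hne] with r hr hrmem
    rw [Set.uIoc_of_le hs.1] at hrmem
    have hroo : r ∈ Set.Ioo (0:ℝ) 1 := by
      constructor
      · exact hrmem.1
      · exact lt_of_le_of_ne (hrmem.2.trans hs.2) hr
    have e1 : derivWithin g (Set.Icc 0 1) r = derivWithin G (Set.Icc 0 1) r :=
      derivWithin_congr hGeq (hGeq ⟨hroo.1.le, hroo.2.le⟩)
    have e2 : derivWithin G (Set.Icc 0 1) r = deriv G r :=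
      derivWithin_of_mem_nhds (Icc_mem_nhds hroo.1 hroo.2)
    rw [e1, e2]
  -- compare Z and y
  have hZy : ∀ s ∈ Set.Icc (0:ℝ) 1, Z s = y s := by
    refine comparison_lemma hBbd hBlip u lam hZlip.continuousOn hyc
      (hwmeas.aemeasurable.aestronglyMeasurable) Kg.coe_nonneg
      (Eventually.of_forall (fun r => hwbd r)) ?_
    intro s hs
    have hIZ : IntervalIntegrable (fun r => w r • (B (Z r)) u) volume 0 s := by
      refine II_of_bdd (c := (Kg : ℝ) * (M * ‖u‖)) hs.1 ?_ (Eventually.of_forall (fun r => ?_))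
      · refine (hwmeas.aemeasurable.aestronglyMeasurable).smul ?_
        refine ContinuousOn.aestronglyMeasurable ?_ measurableSet_Ioc
        refine ContinuousOn.clm_apply ?_ continuousOn_const
        exact hBlip.continuous.comp_continuousOn
          (hZlip.continuousOn.mono (Set.Ioc_subset_Icc_self.trans (Set.Icc_subset_Icc le_rfl hs.2)))
      · calc ‖w r • (B (Z r)) u‖ = |w r| * ‖(B (Z r)) u‖ := by rw [norm_smul, Real.norm_eq_abs]
        _ ≤ (Kg : ℝ) * (M * ‖u‖) := by
            refine mul_le_mul (hwbd r) ?_ (norm_nonneg _) Kg.coe_nonneg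
            exact le_trans ((B (Z r)).le_opNorm u)
              (mul_le_mul_of_nonneg_right (hBbd _) (norm_nonneg _))
    have hIy : IntervalIntegrable (fun r => w r • (B (y r)) u) volume 0 s := by
      refine II_of_bdd (c := (Kg : ℝ) * (M * ‖u‖)) hs.1 ?_ (Eventually.of_forall (fun r => ?_))
      · refine (hwmeas.aemeasurable.aestronglyMeasurable).smul ?_
        refine ContinuousOn.aestronglyMeasurable ?_ measurableSet_Ioc
        refine ContinuousOn.clm_apply ?_ continuousOn_const
        exact hBlip.continuous.comp_continuousOn
          (hyc.mono (Set.Ioc_subset_Icc_self.trans (Set.Icc_subset_Icc le_rfl hs.2)))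
      · calc ‖w r • (B (y r)) u‖ = |w r| * ‖(B (y r)) u‖ := by rw [norm_smul, Real.norm_eq_abs]
        _ ≤ (Kg : ℝ) * (M * ‖u‖) := by
            refine mul_le_mul (hwbd r) ?_ (norm_nonneg _) Kg.coe_nonneg
            exact le_trans ((B (y r)).le_opNorm u)
              (mul_le_mul_of_nonneg_right (hBbd _) (norm_nonneg _))
    rw [hZ' s hs, hyeq s hs]
    rw [add_sub_add_left_eq_sub, ← smul_sub, ← intervalIntegral.integral_sub hIZ hIy]
    congr 1
    refine intervalIntegral.integral_congr (fun r _ => ?_)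
    rw [smul_sub]
  have hZ1 : Z 1 = φ (g 1) := by
    rw [hZy 1 (Set.right_mem_Icc.2 zero_le_one)]
    show φ (G 1) = φ (g 1)
    rw [hG1]
  -- the straight-line solution ψ
  set ψ : ℝ → EuclideanSpace ℝ (Fin m) := fun s => φ (g 1 * s) with hψ
  have hg1bd : |g 1| ≤ (Kg : ℝ) := by
    rw [← hG1]; exact hGbd 1 (Set.right_mem_Icc.2 zero_le_one)
  have hmaps2 : ∀ s ∈ Set.Icc (0:ℝ) 1, g 1 * s ∈ Set.Icc (-(Kg:ℝ)) Kg := by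
    intro s hs
    have h1 : |g 1 * s| ≤ (Kg : ℝ) := by
      rw [abs_mul]
      calc |g 1| * |s| ≤ (Kg : ℝ) * 1 := by
            refine mul_le_mul hg1bd ?_ (abs_nonneg _) Kg.coe_nonneg
            rw [abs_of_nonneg hs.1]; exact hs.2
      _ = (Kg : ℝ) := mul_one _
    have := abs_le.1 h1
    exact ⟨this.1, this.2⟩
  have hψd : ∀ s ∈ Set.Icc (0:ℝ) 1, HasDerivAt ψ (g 1 • (lam • (B (ψ s)) u)) s := by
    intro s hs
    have hin : HasDerivAt (fun s : ℝ => g 1 * s) (g 1) s := by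
      simpa using (hasDerivAt_id s).const_mul (g 1)
    exact (hφat (g 1 * s) (hmaps2 s hs)).scomp s hin
  have hψc : ContinuousOn ψ (Set.Icc 0 1) := by
    refine hφcont.comp ((continuous_const.mul continuous_id).continuousOn) ?_
    intro s hs
    have := hmaps2 s hs
    constructor <;> simp only [ha] <;> [linarith [this.1]; linarith [this.2]]
  have hψ0 : ψ 0 = z₀ := by rw [hψ]; simp only [mul_zero]; exact hφ0
  have hψeq : ∀ s ∈ Set.Icc (0:ℝ) 1,
      ψ s = z₀ + (lam * g 1) • ∫ r in (0:ℝ)..s, (B (ψ r)) u := by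
    intro s hs
    have hderiv : ∀ t ∈ Set.uIcc (0:ℝ) s, HasDerivAt ψ (g 1 • (lam • (B (ψ t)) u)) t := by
      intro t ht
      rw [Set.uIcc_of_le hs.1] at ht
      exact hψd t ⟨ht.1, ht.2.trans hs.2⟩
    have hint : IntervalIntegrable (fun t => g 1 • (lam • (B (ψ t)) u)) volume 0 s := by
      refine ContinuousOn.intervalIntegrable ?_
      refine ContinuousOn.const_smul (ContinuousOn.const_smul ?_ lam) (g 1)
      refine ContinuousOn.clm_apply ?_ continuousOn_const
      refine hBlip.continuous.comp_continuousOn (hψc.mono ?_)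
      rw [Set.uIcc_of_le hs.1]
      exact Set.Icc_subset_Icc le_rfl hs.2
    have hftc := intervalIntegral.integral_eq_sub_of_hasDerivAt hderiv hint
    rw [hψ0] at hftc
    have h2 : ∫ r in (0:ℝ)..s, g 1 • (lam • (B (ψ r)) u)
        = (lam * g 1) • ∫ r in (0:ℝ)..s, (B (ψ r)) u := by
      rw [← intervalIntegral.integral_smul]
      refine intervalIntegral.integral_congr (fun r _ => ?_)
      rw [smul_smul, mul_comm]
    rw [h2] at hftc
    exact sub_eq_iff_eq_add'.1 hftc.symm
  -- compare Zl and ψ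
  have hZlψ : ∀ s ∈ Set.Icc (0:ℝ) 1, Zl s = ψ s := by
    refine comparison_lemma hBbd hBlip u (lam * g 1) hZlcont hψc
      (aestronglyMeasurable_const : AEStronglyMeasurable (fun _ : ℝ => (1:ℝ)) _)
      zero_le_one (Eventually.of_forall (fun r => by norm_num)) ?_
    intro s hs
    have hIZ : IntervalIntegrable (fun r => (B (Zl r)) u) volume 0 s := by
      refine ContinuousOn.intervalIntegrable ?_
      refine ContinuousOn.clm_apply ?_ continuousOn_const
      refine hBlip.continuous.comp_continuousOn (hZlcont.mono ?_)
      rw [Set.uIcc_of_le hs.1]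
      exact Set.Icc_subset_Icc le_rfl hs.2
    have hIψ : IntervalIntegrable (fun r => (B (ψ r)) u) volume 0 s := by
      refine ContinuousOn.intervalIntegrable ?_
      refine ContinuousOn.clm_apply ?_ continuousOn_const
      refine hBlip.continuous.comp_continuousOn (hψc.mono ?_)
      rw [Set.uIcc_of_le hs.1]
      exact Set.Icc_subset_Icc le_rfl hs.2
    rw [hZl s hs, hψeq s hs]
    rw [add_sub_add_left_eq_sub, ← smul_sub, ← intervalIntegral.integral_sub hIZ hIψ]
    congr 1
    refine intervalIntegral.integral_congr (fun r _ => ?_)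
    rw [one_smul]
  have hZl1 : Zl 1 = φ (g 1) := by
    rw [hZlψ 1 (Set.right_mem_Icc.2 zero_le_one), hψ]
    simp
  rw [hZ1, hZl1]
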